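/- The quotient ring S_Σ/(I_Σ + (u − 1)) is isomorphic as a ℂ-algebra to the polynomial ring over ℂ in the 13 variables q₁,q₂,q₃,r,s₁₁,s₁₂,s₁₃,s₂₂,s₂₃,s₃₃,t₁,t₂,t₃ (that is, on the chart u = 1 of Σ¹⁴_𝔸, the coordinates p₁, p₂, p₃, p₄ can be regularly eliminated and the chart is isomorphic to affine 13-space). -/

import Mathlib

/-!
`S_Σ = ℂ[p₁,p₂,p₃,p₄,q₁,q₂,q₃,r,u,s₁₁,s₁₂,s₁₃,s₂₂,s₂₃,s₃₃,t₁,t₂,t₃]` is the polynomial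
ring in 18 variables, indexed by `Fin 18` in this order.  Writing `p`, `q`, `t` for the
corresponding column vectors, `S` for the symmetric matrix with entries `sᵢⱼ`, `A` for the
skew-symmetric matrix attached to `q`, `S†` for the adjugate of `S`,
`(F₁,F₂,F₃)ᵗ = (rI − AS)·A·t` and `F₄ = −(r² + qᵗ·S†·q)`, the ideal `I_Σ` is generated by
the nine polynomials `pᵗ·q`, the three entries of `(rI + AS)·p + p₄·A·t`,
`pᵗ·S·p + p₄·pᵗ·t`, the three entries of `u·p − (F₁,F₂,F₃)ᵗ`, and `u·p₄ − F₄`.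
`R_Σ = S_Σ/I_Σ`.
-/

open MvPolynomial Matrix

noncomputable section

/-- The polynomial ring in the 18 variables
`p₁,p₂,p₃,p₄,q₁,q₂,q₃,r,u,s₁₁,s₁₂,s₁₃,s₂₂,s₂₃,s₃₃,t₁,t₂,t₃` (in this order). -/
abbrev SSigma : Type := MvPolynomial (Fin 18) ℂ

/-- The column vector `p = (p₁,p₂,p₃)ᵗ`. -/
def pVec : Fin 3 → SSigma := ![X 0, X 1, X 2]

/-- The column vector `q = (q₁,q₂,q₃)ᵗ`. -/
def qVec : Fin 3 → SSigma := ![X 4, X 5, X 6]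

/-- The column vector `t = (t₁,t₂,t₃)ᵗ`. -/
def tVec : Fin 3 → SSigma := ![X 15, X 16, X 17]

/-- The symmetric matrix `S` with entries `sᵢⱼ`. -/
def Smat : Matrix (Fin 3) (Fin 3) SSigma :=
  !![X 9, X 10, X 11; X 10, X 12, X 13; X 11, X 13, X 14]

/-- The skew-symmetric matrix `A` associated to `q`. -/
def Amat : Matrix (Fin 3) (Fin 3) SSigma :=
  !![0, -X 6, X 5; X 6, 0, -X 4; -X 5, X 4, 0]

/-- The vector of polynomials `(F₁,F₂,F₃)ᵗ = (rI − AS)·A·t`. -/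
def Fvec : Fin 3 → SSigma :=
  ((X 7 : SSigma) • (1 : Matrix (Fin 3) (Fin 3) SSigma) - Amat * Smat) *ᵥ (Amat *ᵥ tVec)

/-- The polynomial `F₄ = −(r² + qᵗ·S†·q)`, where `S†` is the adjugate of `S`. -/
def F4 : SSigma := -((X 7) ^ 2 + qVec ⬝ᵥ (Smat.adjugate *ᵥ qVec))

/-- The nine generators of the ideal `I_Σ`: `pᵗ·q`; the three entries of
`(rI + AS)·p + p₄·A·t`; `pᵗ·S·p + p₄·pᵗ·t`; the three entries of `u·p − (F₁,F₂,F₃)ᵗ`;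
and `u·p₄ − F₄`. -/
def sigmaGens : Fin 9 → SSigma :=
  ![pVec ⬝ᵥ qVec,
    ((((X 7 : SSigma) • (1 : Matrix (Fin 3) (Fin 3) SSigma) + Amat * Smat) *ᵥ pVec) +
      (X 3 : SSigma) • (Amat *ᵥ tVec)) 0,
    ((((X 7 : SSigma) • (1 : Matrix (Fin 3) (Fin 3) SSigma) + Amat * Smat) *ᵥ pVec) +
      (X 3 : SSigma) • (Amat *ᵥ tVec)) 1,
    ((((X 7 : SSigma) • (1 : Matrix (Fin 3) (Fin 3) SSigma) + Amat * Smat) *ᵥ pVec) +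
      (X 3 : SSigma) • (Amat *ᵥ tVec)) 2,
    pVec ⬝ᵥ (Smat *ᵥ pVec) + X 3 * (pVec ⬝ᵥ tVec),
    ((X 8 : SSigma) • pVec - Fvec) 0,
    ((X 8 : SSigma) • pVec - Fvec) 1,
    ((X 8 : SSigma) • pVec - Fvec) 2,
    X 8 * X 3 - F4]

/-- The ideal `I_Σ ⊆ S_Σ`. -/
def ISigma : Ideal SSigma := Ideal.span (Set.range sigmaGens)

/-- The quotient ring `R_Σ = S_Σ/I_Σ`. -/
abbrev RSigma : Type := SSigma ⧸ ISigma



set_option maxHeartbeats 4000000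

lemma Fvec_eq : Fvec = ![
    -X 6*X 7*X 16 + X 6*X 6*X 12*X 15 - X 6*X 6*X 10*X 16 + X 5*X 7*X 17 + (-2)*X 5*X 6*X 13*X 15 + X 5*X 6*X 11*X 16 + X 5*X 6*X 10*X 17 + X 5*X 5*X 14*X 15 - X 5*X 5*X 11*X 17 + X 4*X 6*X 13*X 16 - X 4*X 6*X 12*X 17 - X 4*X 5*X 14*X 16 + X 4*X 5*X 13*X 17,
    X 6*X 7*X 15 - X 6*X 6*X 10*X 15 + X 6*X 6*X 9*X 16 + X 5*X 6*X 11*X 15 - X 5*X 6*X 9*X 17 - X 4*X 7*X 17 + X 4*X 6*X 13*X 15 + (-2)*X 4*X 6*X 11*X 16 + X 4*X 6*X 10*X 17 - X 4*X 5*X 14*X 15 + X 4*X 5*X 11*X 17 + X 4*X 4*X 14*X 16 - X 4*X 4*X 13*X 17,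
    -X 5*X 7*X 15 + X 5*X 6*X 10*X 15 - X 5*X 6*X 9*X 16 - X 5*X 5*X 11*X 15 + X 5*X 5*X 9*X 17 + X 4*X 7*X 16 - X 4*X 6*X 12*X 15 + X 4*X 6*X 10*X 16 + X 4*X 5*X 13*X 15 + X 4*X 5*X 11*X 16 + (-2)*X 4*X 5*X 10*X 17 - X 4*X 4*X 13*X 16 + X 4*X 4*X 12*X 17] := by
  funext i
  fin_cases i <;>
  · simp [Fvec, Amat, Smat, tVec, Matrix.mulVec, dotProduct, Fin.sum_univ_three,
      Matrix.mul_apply, Matrix.sub_apply, Matrix.smul_apply, Matrix.one_apply, smul_eq_mul]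
    ring

lemma F4_eq : F4 = -X 7*X 7 + X 6*X 6*X 10*X 10 - X 6*X 6*X 9*X 12 + (-2)*X 5*X 6*X 10*X 11 + (2)*X 5*X 6*X 9*X 13 + X 5*X 5*X 11*X 11 - X 5*X 5*X 9*X 14 + (2)*X 4*X 6*X 11*X 12 + (-2)*X 4*X 6*X 10*X 13 + (-2)*X 4*X 5*X 11*X 13 + (2)*X 4*X 5*X 10*X 14 + X 4*X 4*X 13*X 13 - X 4*X 4*X 12*X 14 := by
  simp [F4, qVec, Smat, Matrix.adjugate_fin_three, Matrix.mulVec, dotProduct,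
    Fin.sum_univ_three]
  ring

/-- The substitution realizing the elimination of `p₁,p₂,p₃,p₄` on the chart `u = 1`. -/
def sigSub : Fin 18 → MvPolynomial (Fin 13) ℂ :=
  ![(-X 2*X 3*X 11 + X 2*X 2*X 7*X 10 - X 2*X 2*X 5*X 11 + X 1*X 3*X 12 + (-2)*X 1*X 2*X 8*X 10 + X 1*X 2*X 6*X 11 + X 1*X 2*X 5*X 12 + X 1*X 1*X 9*X 10 - X 1*X 1*X 6*X 12 + X 0*X 2*X 8*X 11 - X 0*X 2*X 7*X 12 - X 0*X 1*X 9*X 11 + X 0*X 1*X 8*X 12),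
    (X 2*X 3*X 10 - X 2*X 2*X 5*X 10 + X 2*X 2*X 4*X 11 + X 1*X 2*X 6*X 10 - X 1*X 2*X 4*X 12 - X 0*X 3*X 12 + X 0*X 2*X 8*X 10 + (-2)*X 0*X 2*X 6*X 11 + X 0*X 2*X 5*X 12 - X 0*X 1*X 9*X 10 + X 0*X 1*X 6*X 12 + X 0*X 0*X 9*X 11 - X 0*X 0*X 8*X 12),
    (-X 1*X 3*X 10 + X 1*X 2*X 5*X 10 - X 1*X 2*X 4*X 11 - X 1*X 1*X 6*X 10 + X 1*X 1*X 4*X 12 + X 0*X 3*X 11 - X 0*X 2*X 7*X 10 + X 0*X 2*X 5*X 11 + X 0*X 1*X 8*X 10 + X 0*X 1*X 6*X 11 + (-2)*X 0*X 1*X 5*X 12 - X 0*X 0*X 8*X 11 + X 0*X 0*X 7*X 12),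
    (-X 3*X 3 + X 2*X 2*X 5*X 5 - X 2*X 2*X 4*X 7 + (-2)*X 1*X 2*X 5*X 6 + (2)*X 1*X 2*X 4*X 8 + X 1*X 1*X 6*X 6 - X 1*X 1*X 4*X 9 + (2)*X 0*X 2*X 6*X 7 + (-2)*X 0*X 2*X 5*X 8 + (-2)*X 0*X 1*X 6*X 8 + (2)*X 0*X 1*X 5*X 9 + X 0*X 0*X 8*X 8 - X 0*X 0*X 7*X 9),
    X 0,
    X 1,
    X 2,
    X 3,
    1,
    X 4,
    X 5,
    X 6,
    X 7,
    X 8,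
    X 9,
    X 10,
    X 11,
    X 12]

@[simp] lemma sigSub_apply_0 : sigSub 0 = ((-X 2*X 3*X 11 + X 2*X 2*X 7*X 10 - X 2*X 2*X 5*X 11 + X 1*X 3*X 12 + (-2)*X 1*X 2*X 8*X 10 + X 1*X 2*X 6*X 11 + X 1*X 2*X 5*X 12 + X 1*X 1*X 9*X 10 - X 1*X 1*X 6*X 12 + X 0*X 2*X 8*X 11 - X 0*X 2*X 7*X 12 - X 0*X 1*X 9*X 11 + X 0*X 1*X 8*X 12)) := rfl
@[simp] lemma sigSub_apply_1 : sigSub 1 = ((X 2*X 3*X 10 - X 2*X 2*X 5*X 10 + X 2*X 2*X 4*X 11 + X 1*X 2*X 6*X 10 - X 1*X 2*X 4*X 12 - X 0*X 3*X 12 + X 0*X 2*X 8*X 10 + (-2)*X 0*X 2*X 6*X 11 + X 0*X 2*X 5*X 12 - X 0*X 1*X 9*X 10 + X 0*X 1*X 6*X 12 + X 0*X 0*X 9*X 11 - X 0*X 0*X 8*X 12)) := rfl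
@[simp] lemma sigSub_apply_2 : sigSub 2 = ((-X 1*X 3*X 10 + X 1*X 2*X 5*X 10 - X 1*X 2*X 4*X 11 - X 1*X 1*X 6*X 10 + X 1*X 1*X 4*X 12 + X 0*X 3*X 11 - X 0*X 2*X 7*X 10 + X 0*X 2*X 5*X 11 + X 0*X 1*X 8*X 10 + X 0*X 1*X 6*X 11 + (-2)*X 0*X 1*X 5*X 12 - X 0*X 0*X 8*X 11 + X 0*X 0*X 7*X 12)) := rfl
@[simp] lemma sigSub_apply_3 : sigSub 3 = ((-X 3*X 3 + X 2*X 2*X 5*X 5 - X 2*X 2*X 4*X 7 + (-2)*X 1*X 2*X 5*X 6 + (2)*X 1*X 2*X 4*X 8 + X 1*X 1*X 6*X 6 - X 1*X 1*X 4*X 9 + (2)*X 0*X 2*X 6*X 7 + (-2)*X 0*X 2*X 5*X 8 + (-2)*X 0*X 1*X 6*X 8 + (2)*X 0*X 1*X 5*X 9 + X 0*X 0*X 8*X 8 - X 0*X 0*X 7*X 9)) := rfl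
@[simp] lemma sigSub_apply_4 : sigSub 4 = (X 0) := rfl
@[simp] lemma sigSub_apply_5 : sigSub 5 = (X 1) := rfl
@[simp] lemma sigSub_apply_6 : sigSub 6 = (X 2) := rfl
@[simp] lemma sigSub_apply_7 : sigSub 7 = (X 3) := rfl
@[simp] lemma sigSub_apply_8 : sigSub 8 = (1) := rfl
@[simp] lemma sigSub_apply_9 : sigSub 9 = (X 4) := rfl
@[simp] lemma sigSub_apply_10 : sigSub 10 = (X 5) := rfl
@[simp] lemma sigSub_apply_11 : sigSub 11 = (X 6) := rfl
@[simp] lemma sigSub_apply_12 : sigSub 12 = (X 7) := rfl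
@[simp] lemma sigSub_apply_13 : sigSub 13 = (X 8) := rfl
@[simp] lemma sigSub_apply_14 : sigSub 14 = (X 9) := rfl
@[simp] lemma sigSub_apply_15 : sigSub 15 = (X 10) := rfl
@[simp] lemma sigSub_apply_16 : sigSub 16 = (X 11) := rfl
@[simp] lemma sigSub_apply_17 : sigSub 17 = (X 12) := rfl

/-- The ideal `I_Σ + (u - 1)`. -/
def JSigma : Ideal SSigma := ISigma ⊔ Ideal.span {(X 8 - 1 : SSigma)}

/-- The elimination homomorphism. -/
def phiHom : SSigma →ₐ[ℂ] MvPolynomial (Fin 13) ℂ := aeval sigSub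

/-- The 13 small variables, viewed in the quotient. -/
def wSub : Fin 13 → (SSigma ⧸ JSigma) :=
  ![Ideal.Quotient.mk JSigma (X 4),
    Ideal.Quotient.mk JSigma (X 5),
    Ideal.Quotient.mk JSigma (X 6),
    Ideal.Quotient.mk JSigma (X 7),
    Ideal.Quotient.mk JSigma (X 9),
    Ideal.Quotient.mk JSigma (X 10),
    Ideal.Quotient.mk JSigma (X 11),
    Ideal.Quotient.mk JSigma (X 12),
    Ideal.Quotient.mk JSigma (X 13),
    Ideal.Quotient.mk JSigma (X 14),
    Ideal.Quotient.mk JSigma (X 15),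
    Ideal.Quotient.mk JSigma (X 16),
    Ideal.Quotient.mk JSigma (X 17)]

@[simp] lemma wSub_apply_0 : wSub 0 = Ideal.Quotient.mk JSigma (X 4) := rfl
@[simp] lemma wSub_apply_1 : wSub 1 = Ideal.Quotient.mk JSigma (X 5) := rfl
@[simp] lemma wSub_apply_2 : wSub 2 = Ideal.Quotient.mk JSigma (X 6) := rfl
@[simp] lemma wSub_apply_3 : wSub 3 = Ideal.Quotient.mk JSigma (X 7) := rfl
@[simp] lemma wSub_apply_4 : wSub 4 = Ideal.Quotient.mk JSigma (X 9) := rfl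
@[simp] lemma wSub_apply_5 : wSub 5 = Ideal.Quotient.mk JSigma (X 10) := rfl
@[simp] lemma wSub_apply_6 : wSub 6 = Ideal.Quotient.mk JSigma (X 11) := rfl
@[simp] lemma wSub_apply_7 : wSub 7 = Ideal.Quotient.mk JSigma (X 12) := rfl
@[simp] lemma wSub_apply_8 : wSub 8 = Ideal.Quotient.mk JSigma (X 13) := rfl
@[simp] lemma wSub_apply_9 : wSub 9 = Ideal.Quotient.mk JSigma (X 14) := rfl
@[simp] lemma wSub_apply_10 : wSub 10 = Ideal.Quotient.mk JSigma (X 15) := rfl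
@[simp] lemma wSub_apply_11 : wSub 11 = Ideal.Quotient.mk JSigma (X 16) := rfl
@[simp] lemma wSub_apply_12 : wSub 12 = Ideal.Quotient.mk JSigma (X 17) := rfl

def psiHom : MvPolynomial (Fin 13) ℂ →ₐ[ℂ] (SSigma ⧸ JSigma) := aeval wSub

lemma gen_mem (k : Fin 9) : sigmaGens k ∈ JSigma :=
  Ideal.mem_sup_left (Ideal.subset_span ⟨k, rfl⟩)

lemma u_sub_one_mem : (X 8 - 1 : SSigma) ∈ JSigma :=
  Ideal.mem_sup_right (Ideal.subset_span rfl)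

lemma phi_gens (k : Fin 9) : phiHom (sigmaGens k) = 0 := by
  have tac5 : phiHom (sigmaGens 5) = 0 := by
    rw [show sigmaGens 5 = X 8 * X 0 - Fvec 0 from rfl, Fvec_eq]
    simp only [Matrix.cons_val_zero, Matrix.cons_val_one, Matrix.head_cons,
      Matrix.cons_val_two, Matrix.tail_cons]
    simp [phiHom, map_add, map_sub, _root_.map_mul, map_neg, map_ofNat]
  have tac6 : phiHom (sigmaGens 6) = 0 := by
    rw [show sigmaGens 6 = X 8 * X 1 - Fvec 1 from rfl, Fvec_eq]
    simp only [Matrix.cons_val_zero, Matrix.cons_val_one, Matrix.head_cons,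
      Matrix.cons_val_two, Matrix.tail_cons]
    simp [phiHom, map_add, map_sub, _root_.map_mul, map_neg, map_ofNat]
  have tac7 : phiHom (sigmaGens 7) = 0 := by
    rw [show sigmaGens 7 = X 8 * X 2 - Fvec 2 from rfl, Fvec_eq]
    simp only [Matrix.cons_val_zero, Matrix.cons_val_one, Matrix.head_cons,
      Matrix.cons_val_two, Matrix.tail_cons]
    simp [phiHom, map_add, map_sub, _root_.map_mul, map_neg, map_ofNat]
  have tac8 : phiHom (sigmaGens 8) = 0 := by
    rw [show sigmaGens 8 = X 8 * X 3 - F4 from rfl, F4_eq]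
    simp [phiHom, map_add, map_sub, _root_.map_mul, map_neg, map_ofNat]
  fin_cases k
  · simp [sigmaGens, pVec, qVec, tVec, Smat, Amat, Matrix.mulVec, dotProduct,
      Fin.sum_univ_three, Matrix.mul_apply, Matrix.add_apply, Matrix.smul_apply,
      Matrix.one_apply, smul_eq_mul, phiHom, map_add, map_sub, _root_.map_mul, map_pow,
      map_neg, _root_.map_one, map_ofNat]
    ring
  · simp [sigmaGens, pVec, qVec, tVec, Smat, Amat, Matrix.mulVec, dotProduct,
      Fin.sum_univ_three, Matrix.mul_apply, Matrix.add_apply, Matrix.smul_apply,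
      Matrix.one_apply, smul_eq_mul, phiHom, map_add, map_sub, _root_.map_mul, map_pow,
      map_neg, _root_.map_one, map_ofNat]
    ring
  · simp [sigmaGens, pVec, qVec, tVec, Smat, Amat, Matrix.mulVec, dotProduct,
      Fin.sum_univ_three, Matrix.mul_apply, Matrix.add_apply, Matrix.smul_apply,
      Matrix.one_apply, smul_eq_mul, phiHom, map_add, map_sub, _root_.map_mul, map_pow,
      map_neg, _root_.map_one, map_ofNat]
    ring
  · simp [sigmaGens, pVec, qVec, tVec, Smat, Amat, Matrix.mulVec, dotProduct,
      Fin.sum_univ_three, Matrix.mul_apply, Matrix.add_apply, Matrix.smul_apply,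
      Matrix.one_apply, smul_eq_mul, phiHom, map_add, map_sub, _root_.map_mul, map_pow,
      map_neg, _root_.map_one, map_ofNat]
    ring
  · simp [sigmaGens, pVec, qVec, tVec, Smat, Amat, Matrix.mulVec, dotProduct,
      Fin.sum_univ_three, Matrix.mul_apply, Matrix.add_apply, Matrix.smul_apply,
      Matrix.one_apply, smul_eq_mul, phiHom, map_add, map_sub, _root_.map_mul, map_pow,
      map_neg, _root_.map_one, map_ofNat]
    ring
  · exact tac5
  · exact tac6
  · exact tac7
  · exact tac8

lemma phi_vanish : ∀ a ∈ JSigma, phiHom a = 0 := by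
  have h : JSigma ≤ RingHom.ker phiHom := by
    refine sup_le (Ideal.span_le.mpr ?_) (Ideal.span_le.mpr ?_)
    · rintro _ ⟨k, rfl⟩
      exact phi_gens k
    · rintro _ rfl
      simp only [SetLike.mem_coe, RingHom.mem_ker, map_sub, _root_.map_one]
      simp [phiHom]
  exact fun a ha => h ha

def phiBar : (SSigma ⧸ JSigma) →ₐ[ℂ] MvPolynomial (Fin 13) ℂ :=
  Ideal.Quotient.liftₐ JSigma phiHom phi_vanish

lemma mk_X8 : Ideal.Quotient.mk JSigma (X 8) = 1 := by
  rw [show (1 : SSigma ⧸ JSigma) = Ideal.Quotient.mk JSigma 1 from (_root_.map_one _).symm,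
    Ideal.Quotient.eq]
  exact u_sub_one_mem

lemma mk_p0 : Ideal.Quotient.mk JSigma (X 0) = Ideal.Quotient.mk JSigma (Fvec 0) := by
  rw [Ideal.Quotient.eq,
    show (X 0 - Fvec 0 : SSigma) = sigmaGens 5 - (X 8 - 1) * X 0 by
      rw [show sigmaGens 5 = X 8 * X 0 - Fvec 0 from rfl]; ring]
  exact sub_mem (gen_mem 5) (Ideal.mul_mem_right _ _ u_sub_one_mem)

lemma mk_p1 : Ideal.Quotient.mk JSigma (X 1) = Ideal.Quotient.mk JSigma (Fvec 1) := by
  rw [Ideal.Quotient.eq,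
    show (X 1 - Fvec 1 : SSigma) = sigmaGens 6 - (X 8 - 1) * X 1 by
      rw [show sigmaGens 6 = X 8 * X 1 - Fvec 1 from rfl]; ring]
  exact sub_mem (gen_mem 6) (Ideal.mul_mem_right _ _ u_sub_one_mem)

lemma mk_p2 : Ideal.Quotient.mk JSigma (X 2) = Ideal.Quotient.mk JSigma (Fvec 2) := by
  rw [Ideal.Quotient.eq,
    show (X 2 - Fvec 2 : SSigma) = sigmaGens 7 - (X 8 - 1) * X 2 by
      rw [show sigmaGens 7 = X 8 * X 2 - Fvec 2 from rfl]; ring]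
  exact sub_mem (gen_mem 7) (Ideal.mul_mem_right _ _ u_sub_one_mem)

lemma mk_p3 : Ideal.Quotient.mk JSigma (X 3) = Ideal.Quotient.mk JSigma F4 := by
  rw [Ideal.Quotient.eq,
    show (X 3 - F4 : SSigma) = sigmaGens 8 - (X 8 - 1) * X 3 by
      rw [show sigmaGens 8 = X 8 * X 3 - F4 from rfl]; ring]
  exact sub_mem (gen_mem 8) (Ideal.mul_mem_right _ _ u_sub_one_mem)

lemma key (i : Fin 18) : psiHom (phiHom (X i)) = Ideal.Quotient.mk JSigma (X i) := by
  fin_cases i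
  · show psiHom (phiHom (X 0)) = Ideal.Quotient.mk JSigma (X 0)
    rw [mk_p0]
    rw [show Fvec 0 = (-X 6*X 7*X 16 + X 6*X 6*X 12*X 15 - X 6*X 6*X 10*X 16 + X 5*X 7*X 17 + (-2)*X 5*X 6*X 13*X 15 + X 5*X 6*X 11*X 16 + X 5*X 6*X 10*X 17 + X 5*X 5*X 14*X 15 - X 5*X 5*X 11*X 17 + X 4*X 6*X 13*X 16 - X 4*X 6*X 12*X 17 - X 4*X 5*X 14*X 16 + X 4*X 5*X 13*X 17) by rw [Fvec_eq]; rfl]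
    simp [phiHom, psiHom, map_add, map_sub, _root_.map_mul, map_neg, map_ofNat]
  · show psiHom (phiHom (X 1)) = Ideal.Quotient.mk JSigma (X 1)
    rw [mk_p1, show Fvec 1 = (X 6*X 7*X 15 - X 6*X 6*X 10*X 15 + X 6*X 6*X 9*X 16 + X 5*X 6*X 11*X 15 - X 5*X 6*X 9*X 17 - X 4*X 7*X 17 + X 4*X 6*X 13*X 15 + (-2)*X 4*X 6*X 11*X 16 + X 4*X 6*X 10*X 17 - X 4*X 5*X 14*X 15 + X 4*X 5*X 11*X 17 + X 4*X 4*X 14*X 16 - X 4*X 4*X 13*X 17) by rw [Fvec_eq]; rfl]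
    simp [phiHom, psiHom, map_add, map_sub, _root_.map_mul, map_neg, map_ofNat]
  · show psiHom (phiHom (X 2)) = Ideal.Quotient.mk JSigma (X 2)
    rw [mk_p2, show Fvec 2 = (-X 5*X 7*X 15 + X 5*X 6*X 10*X 15 - X 5*X 6*X 9*X 16 - X 5*X 5*X 11*X 15 + X 5*X 5*X 9*X 17 + X 4*X 7*X 16 - X 4*X 6*X 12*X 15 + X 4*X 6*X 10*X 16 + X 4*X 5*X 13*X 15 + X 4*X 5*X 11*X 16 + (-2)*X 4*X 5*X 10*X 17 - X 4*X 4*X 13*X 16 + X 4*X 4*X 12*X 17) by rw [Fvec_eq]; rfl]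
    simp [phiHom, psiHom, map_add, map_sub, _root_.map_mul, map_neg, map_ofNat]
  · show psiHom (phiHom (X 3)) = Ideal.Quotient.mk JSigma (X 3)
    rw [mk_p3, F4_eq]
    simp [phiHom, psiHom, map_add, map_sub, _root_.map_mul, map_neg, map_ofNat]
  · show psiHom (phiHom (X 4)) = Ideal.Quotient.mk JSigma (X 4)
    simp [phiHom, psiHom]
  · show psiHom (phiHom (X 5)) = Ideal.Quotient.mk JSigma (X 5)
    simp [phiHom, psiHom]
  · show psiHom (phiHom (X 6)) = Ideal.Quotient.mk JSigma (X 6)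
    simp [phiHom, psiHom]
  · show psiHom (phiHom (X 7)) = Ideal.Quotient.mk JSigma (X 7)
    simp [phiHom, psiHom]
  · show psiHom (phiHom (X 8)) = Ideal.Quotient.mk JSigma (X 8)
    rw [mk_X8]
    simp [phiHom, psiHom]
  · show psiHom (phiHom (X 9)) = Ideal.Quotient.mk JSigma (X 9)
    simp [phiHom, psiHom]
  · show psiHom (phiHom (X 10)) = Ideal.Quotient.mk JSigma (X 10)
    simp [phiHom, psiHom]
  · show psiHom (phiHom (X 11)) = Ideal.Quotient.mk JSigma (X 11)
    simp [phiHom, psiHom]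
  · show psiHom (phiHom (X 12)) = Ideal.Quotient.mk JSigma (X 12)
    simp [phiHom, psiHom]
  · show psiHom (phiHom (X 13)) = Ideal.Quotient.mk JSigma (X 13)
    simp [phiHom, psiHom]
  · show psiHom (phiHom (X 14)) = Ideal.Quotient.mk JSigma (X 14)
    simp [phiHom, psiHom]
  · show psiHom (phiHom (X 15)) = Ideal.Quotient.mk JSigma (X 15)
    simp [phiHom, psiHom]
  · show psiHom (phiHom (X 16)) = Ideal.Quotient.mk JSigma (X 16)
    simp [phiHom, psiHom]
  · show psiHom (phiHom (X 17)) = Ideal.Quotient.mk JSigma (X 17)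
    simp [phiHom, psiHom]

/-- The quotient ring `S_Σ/(I_Σ + (u − 1))` is isomorphic as a ℂ-algebra to the
polynomial ring over ℂ in 13 variables (the chart `u = 1` of `Σ¹⁴_𝔸` is isomorphic to
affine 13-space: the coordinates `p₁, p₂, p₃, p₄` can be regularly eliminated). -/
theorem sigma_u_chart_iso_affine13 :
    Nonempty ((SSigma ⧸ (ISigma ⊔ Ideal.span {(X 8 - 1 : SSigma)})) ≃ₐ[ℂ]
      MvPolynomial (Fin 13) ℂ) := by
  show Nonempty ((SSigma ⧸ JSigma) ≃ₐ[ℂ] MvPolynomial (Fin 13) ℂ)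
  refine ⟨AlgEquiv.ofAlgHom phiBar psiHom ?_ ?_⟩
  · apply MvPolynomial.algHom_ext
    intro j
    fin_cases j <;>
      simp [psiHom, phiBar, phiHom, aeval_X, Ideal.Quotient.liftₐ_apply,
        Ideal.Quotient.lift_mk] <;>
      erw [Ideal.Quotient.lift_mk] <;> simp
  · apply Ideal.Quotient.algHom_ext
    apply MvPolynomial.algHom_ext
    intro i
    simp only [AlgHom.comp_apply, AlgHom.id_apply, Ideal.Quotient.mkₐ_eq_mk]
    have hb : phiBar (Ideal.Quotient.mk JSigma (X i)) = phiHom (X i) :=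
      Ideal.Quotient.lift_mk _ _ _
    rw [hb]
    exact key i
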